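/- arXiv:1508.04272 — 3 statements merged into one kernel-verified Lean document; each statement's English description precedes it below -/
import Mathlib

section
/- For all N ≥ 2, Ψ([N]) = (Φ(4, N+1) − 1)/2, where [N] = {0, 1, ..., N−1}, Ψ(E) := sup_{L ∈ ℕ} [ (1−L)·2^L − 1 + Σ_{n ∈ E} 2^{min(∇_4(n), L)} ], ∇_4(n) = max{k ≥ 0 : k(k+1)/2 ≤ n}, and Φ(4, M) = Σ_{n=0}^{M−1} 2^{∇_4(n)}. -/
/-- `∇_4(n) := max{k ≥ 0 : k(k+1)/2 ≤ n}`. -/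
def nabla4 (n : ℕ) : ℕ := Nat.findGreatest (fun k => Nat.choose (k + 1) 2 ≤ n) n

/-- `Φ(4, M) := Σ_{n=0}^{M-1} 2^{∇_4(n)}`. -/
def Phi4 (M : ℕ) : ℕ := ∑ n ∈ Finset.range M, 2 ^ nabla4 n

/-- `Ψ_L(E) := (1−L)·2^L − 1 + Σ_{n ∈ E} 2^{min(∇_4(n), L)}`, an integer. -/
def PsiL (E : Finset ℕ) (L : ℕ) : ℤ :=
  (1 - (L : ℤ)) * 2 ^ L - 1 + ∑ n ∈ E, 2 ^ min (nabla4 n) L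

/-- `Ψ(E) := sup_{L ∈ ℕ} Ψ_L(E)`. -/
noncomputable def Psi (E : Finset ℕ) : ℤ := sSup (Set.range (PsiL E))

/-- triangular numbers -/
def T4 (k : ℕ) : ℕ := Nat.choose (k + 1) 2

lemma T4_zero : T4 0 = 0 := rfl

lemma T4_succ (k : ℕ) : T4 (k + 1) = T4 k + (k + 1) := by
  unfold T4
  rw [Nat.choose_succ_succ (k + 1) 1, Nat.choose_one_right, Nat.add_comm]

lemma self_le_T4 (k : ℕ) : k ≤ T4 k := by
  induction k with
  | zero => simp [T4_zero]
  | succ k ih => rw [T4_succ]; omega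

lemma T4_mono : Monotone T4 :=
  monotone_nat_of_le_succ fun k => by rw [T4_succ]; omega

lemma le_nabla4 {k n : ℕ} (h : T4 k ≤ n) : k ≤ nabla4 n :=
  Nat.le_findGreatest (le_trans (self_le_T4 k) h) h

lemma T4_nabla4_le (n : ℕ) : T4 (nabla4 n) ≤ n := by
  rcases Nat.eq_zero_or_pos (nabla4 n) with h | h
  · rw [h, T4_zero]; exact Nat.zero_le n
  · show Nat.choose (nabla4 n + 1) 2 ≤ n
    exact Nat.findGreatest_of_ne_zero (n := n)
      (P := fun k => Nat.choose (k + 1) 2 ≤ n) rfl (by omega)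

lemma nabla4_lt (n : ℕ) : n < T4 (nabla4 n + 1) := by
  by_contra h
  push_neg at h
  have := le_nabla4 h
  omega

lemma nabla4_le_of_lt {n L : ℕ} (h : n < T4 (L + 1)) : nabla4 n ≤ L := by
  by_contra hc
  push_neg at hc
  have h2 : L + 1 ≤ nabla4 n := hc
  have := le_trans (T4_mono h2) (T4_nabla4_le n)
  omega

lemma nabla4_eq {n k : ℕ} (h1 : T4 k ≤ n) (h2 : n < T4 (k + 1)) : nabla4 n = k :=
  le_antisymm (nabla4_le_of_lt h2) (le_nabla4 h1)

lemma nabla4_mono : Monotone nabla4 := fun a b h =>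
  le_nabla4 (le_trans (T4_nabla4_le a) h)

lemma ind_sum (c : ℕ) (x : ℤ) (N : ℕ) :
    ∑ n ∈ Finset.range N, (if c ≤ n then x else 0) = ((N - c : ℕ) : ℤ) * x := by
  induction N with
  | zero => simp
  | succ N ih =>
    rw [Finset.sum_range_succ, ih]
    by_cases h : c ≤ N
    · rw [if_pos h]
      have h2 : N + 1 - c = (N - c) + 1 := by omega
      rw [h2]; push_cast; ring
    · rw [if_neg h]
      have h2 : N + 1 - c = N - c := by omega
      rw [h2]; ring

lemma psi_step (N L : ℕ) :
    PsiL (Finset.range N) (L + 1)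
      = PsiL (Finset.range N) L + 2 ^ L * (((N - T4 (L + 1) : ℕ) : ℤ) - (L + 1 : ℤ)) := by
  have hsum : ∑ n ∈ Finset.range N, (2 : ℤ) ^ min (nabla4 n) (L + 1)
      = ∑ n ∈ Finset.range N,
          ((2 : ℤ) ^ min (nabla4 n) L + if T4 (L + 1) ≤ n then 2 ^ L else 0) := by
    apply Finset.sum_congr rfl
    intro n _
    by_cases h : T4 (L + 1) ≤ n
    · have h1 : L + 1 ≤ nabla4 n := le_nabla4 h
      rw [min_eq_right h1, min_eq_right (by omega : L ≤ nabla4 n), if_pos h, pow_succ]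
      ring
    · push_neg at h
      have h1 : nabla4 n ≤ L := nabla4_le_of_lt h
      rw [min_eq_left h1, min_eq_left (by omega : nabla4 n ≤ L + 1), if_neg (by omega)]
      ring
  unfold PsiL
  rw [hsum, Finset.sum_add_distrib, ind_sum]
  push_cast
  ring

lemma phi_closed (N : ℕ) :
    (Phi4 N : ℤ) = ((N : ℤ) - (T4 (nabla4 N) : ℤ) + (nabla4 N : ℤ) - 1) * 2 ^ nabla4 N + 1 := by
  induction N with
  | zero =>
    have h0 : nabla4 0 = 0 := rfl
    simp [Phi4, h0, T4_zero]
  | succ N ih =>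
    have hstep : (Phi4 (N + 1) : ℤ) = (Phi4 N : ℤ) + 2 ^ nabla4 N := by
      unfold Phi4
      rw [Finset.sum_range_succ]
      push_cast
      ring
    set K := nabla4 N with hK
    by_cases h : T4 (K + 1) ≤ N + 1
    · have hNe : N + 1 = T4 (K + 1) := le_antisymm (nabla4_lt N) h
      have hK' : nabla4 (N + 1) = K + 1 := by
        apply nabla4_eq h
        rw [T4_succ (K + 1)]
        omega
      rw [hstep, ih, hK']
      have hT : (T4 (K + 1) : ℤ) = (T4 K : ℤ) + (K + 1 : ℤ) := by
        rw [T4_succ]; push_cast; ring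
      have hNe' : (N : ℤ) + 1 = (T4 (K + 1) : ℤ) := by exact_mod_cast hNe
      rw [pow_succ]
      push_cast
      nlinarith [hNe', hT]
    · push_neg at h
      have hK' : nabla4 (N + 1) = K := by
        exact nabla4_eq (le_trans (T4_nabla4_le N) (by omega)) h
      rw [hstep, ih, hK']
      push_cast
      ring

/-- For all `N ≥ 2`, `Ψ([N]) = (Φ(4, N+1) − 1)/2`. -/
theorem psi_range_eq (N : ℕ) (hN : 2 ≤ N) :
    Psi (Finset.range N) = ((Phi4 (N + 1) : ℤ) - 1) / 2 := by
  have hK1 : 1 ≤ nabla4 N := le_nabla4 (by rw [show T4 1 = 1 from rfl]; omega)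
  obtain ⟨L0, hL0⟩ : ∃ L0, nabla4 N = L0 + 1 := ⟨nabla4 N - 1, by omega⟩
  have hTKN : T4 (L0 + 1) ≤ N := hL0 ▸ T4_nabla4_le N
  have hNlt : N < T4 (L0 + 1) + (L0 + 2) := by
    have h1 := nabla4_lt N
    rw [hL0, T4_succ (L0 + 1)] at h1
    omega
  set E := Finset.range N with hE
  -- step is nonneg below L0
  have hup1 : ∀ L, L + 2 ≤ L0 + 1 → PsiL E L ≤ PsiL E (L + 1) := by
    intro L hL
    rw [psi_step]
    have hT2 : T4 (L + 2) ≤ N := le_trans (T4_mono (by omega : L + 2 ≤ L0 + 1)) hTKN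
    have hT2' : T4 (L + 2) = T4 (L + 1) + (L + 2) := T4_succ (L + 1)
    have hc : L + 1 ≤ N - T4 (L + 1) := by omega
    have : (0 : ℤ) ≤ 2 ^ L * (((N - T4 (L + 1) : ℕ) : ℤ) - (L + 1 : ℤ)) := by
      apply mul_nonneg (by positivity)
      have : ((L + 1 : ℕ) : ℤ) ≤ ((N - T4 (L + 1) : ℕ) : ℤ) := by exact_mod_cast hc
      push_cast at this ⊢
      linarith
    linarith
  -- step is nonpos from L0 on
  have hdn1 : ∀ L, L0 + 1 ≤ L + 1 → PsiL E (L + 1) ≤ PsiL E L := by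
    intro L hL
    rw [psi_step]
    have hm : T4 (L0 + 1) ≤ T4 (L + 1) := T4_mono hL
    have hc : N - T4 (L + 1) ≤ L + 1 := by omega
    have : 2 ^ L * (((N - T4 (L + 1) : ℕ) : ℤ) - (L + 1 : ℤ)) ≤ 0 := by
      apply mul_nonpos_iff.mpr
      left
      refine ⟨by positivity, ?_⟩
      have : ((N - T4 (L + 1) : ℕ) : ℤ) ≤ ((L + 1 : ℕ) : ℤ) := by exact_mod_cast hc
      push_cast at this ⊢
      linarith
    linarith
  -- upper bound for all L
  have hub : ∀ L, PsiL E L ≤ PsiL E L0 := by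
    have hup : ∀ d L, L + d = L0 → PsiL E L ≤ PsiL E L0 := by
      intro d
      induction d with
      | zero =>
        intro L h
        have hLe : L = L0 := by omega
        rw [hLe]
      | succ d ih =>
        intro L h
        have h1 : PsiL E L ≤ PsiL E (L + 1) := hup1 L (by omega)
        exact le_trans h1 (ih (L + 1) (by omega))
    have hdn : ∀ d, PsiL E (L0 + d) ≤ PsiL E L0 := by
      intro d
      induction d with
      | zero => simp
      | succ d ih =>
        have h1 : PsiL E (L0 + d + 1) ≤ PsiL E (L0 + d) := hdn1 (L0 + d) (by omega)
        rw [show L0 + (d + 1) = L0 + d + 1 from rfl]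
        exact le_trans h1 ih
    intro L
    rcases le_or_gt L L0 with h | h
    · exact hup (L0 - L) L (by omega)
    · have := hdn (L - L0)
      rwa [show L0 + (L - L0) = L by omega] at this
  -- value at K
  have hPsiK : PsiL E (L0 + 1) = ((N : ℤ) - (T4 (L0 + 1) : ℤ)) * 2 ^ (L0 + 1) := by
    have hsum : ∑ n ∈ E, (2 : ℤ) ^ min (nabla4 n) (L0 + 1) = (Phi4 N : ℤ) := by
      rw [hE]
      unfold Phi4
      push_cast
      apply Finset.sum_congr rfl
      intro n hn
      have hn' : n < N := Finset.mem_range.mp hn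
      have hle : nabla4 n ≤ L0 + 1 := hL0 ▸ nabla4_mono hn'.le
      rw [min_eq_left hle]
    unfold PsiL
    rw [hsum, phi_closed, hL0]
    ring
  -- value at L0
  have hPsiL0 : PsiL E L0 = ((N : ℤ) - (T4 (L0 + 1) : ℤ) + ((L0 : ℤ) + 1)) * 2 ^ L0 := by
    have hs := psi_step N L0
    rw [← hE] at hs
    have hcast : ((N - T4 (L0 + 1) : ℕ) : ℤ) = (N : ℤ) - (T4 (L0 + 1) : ℤ) := by
      push_cast [hTKN]; ring
    rw [hPsiK, hcast] at hs
    have hpow : (2 : ℤ) ^ (L0 + 1) = 2 ^ L0 * 2 := by rw [pow_succ]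
    push_cast at hs ⊢
    nlinarith [hs, hpow]
  -- RHS
  have hPhi : (Phi4 (N + 1) : ℤ) - 1
      = 2 * (((N : ℤ) - (T4 (L0 + 1) : ℤ) + ((L0 : ℤ) + 1)) * 2 ^ L0) := by
    have hstep : (Phi4 (N + 1) : ℤ) = (Phi4 N : ℤ) + 2 ^ (L0 + 1) := by
      unfold Phi4
      rw [Finset.sum_range_succ, hL0]
      push_cast
      ring
    rw [hstep, phi_closed, hL0, T4_succ, pow_succ]
    push_cast
    ring
  have hgreat : IsGreatest (Set.range (PsiL E)) (PsiL E L0) :=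
    ⟨Set.mem_range_self L0, by rintro x ⟨L, rfl⟩; exact hub L⟩
  rw [show Psi E = sSup (Set.range (PsiL E)) from rfl, hgreat.csSup_eq, hPhi, hPsiL0,
    Int.mul_ediv_cancel_left _ (by norm_num)]
end

section
/- Let A ⊂ ℕ be finite and s a natural number such that the set A \ [Δ_4(s)] (elements of A that are ≥ s(s+1)/2) has at most s elements. Then for every a ∈ A, Ψ(A) − Ψ(A \ {a}) ≤ 2^{s−1}. -/
lemma nabla4_ge_iff (n k : ℕ) : k ≤ nabla4 n ↔ Nat.choose (k + 1) 2 ≤ n := by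
  have hk : k ≤ Nat.choose (k + 1) 2 := by
    rw [Nat.choose_succ_succ]
    simp [Nat.choose_one_right]
  constructor
  · intro h
    have h2 : Nat.choose (nabla4 n + 1) 2 ≤ n :=
      Nat.findGreatest_spec (P := fun k => Nat.choose (k + 1) 2 ≤ n) (Nat.zero_le _)
        (by simp)
    exact le_trans (Nat.choose_le_choose 2 (by omega)) h2
  · intro h
    exact Nat.le_findGreatest (le_trans hk h) h

lemma psiL_step (E : Finset ℕ) (s L : ℕ) (hL : s ≤ L + 1)
    (hcard : (E \ Finset.range (Nat.choose (s + 1) 2)).card ≤ s) :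
    PsiL E (L + 1) ≤ PsiL E L := by
  set D := Nat.choose (s + 1) 2 with hD
  set c := (E.filter (fun n => D ≤ n)).card with hc
  have hcs : c ≤ s := by
    refine le_trans (Finset.card_le_card ?_) hcard
    intro n hn
    simp only [Finset.mem_filter] at hn
    simp only [Finset.mem_sdiff, Finset.mem_range]
    exact ⟨hn.1, by omega⟩
  have hsum : ∑ n ∈ E, (2:ℤ) ^ min (nabla4 n) (L + 1)
      ≤ (∑ n ∈ E, (2:ℤ) ^ min (nabla4 n) L) + c * 2 ^ L := by
    have hcval : (c : ℤ) * 2 ^ L = ∑ n ∈ E, (if D ≤ n then (2:ℤ) ^ L else 0) := by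
      rw [← Finset.sum_filter, Finset.sum_const, hc]
      push_cast
      ring
    rw [hcval, ← Finset.sum_add_distrib]
    refine Finset.sum_le_sum ?_
    intro n hn
    by_cases h : nabla4 n ≤ L
    · rw [min_eq_left h, min_eq_left (h.trans (Nat.le_succ L))]
      have : (0:ℤ) ≤ if D ≤ n then (2:ℤ) ^ L else 0 := by positivity
      linarith
    · push_neg at h
      have h1 : L + 1 ≤ nabla4 n := h
      rw [min_eq_right h1, min_eq_right (Nat.le_of_succ_le h1)]
      have hDn : D ≤ n := by
        rw [hD, ← nabla4_ge_iff]
        omega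
      rw [if_pos hDn]
      rw [pow_succ]
      ring_nf
      linarith
  have hp : (0:ℤ) < 2 ^ L := by positivity
  have hLc : (c : ℤ) ≤ (L : ℤ) + 1 := by exact_mod_cast le_trans hcs hL
  unfold PsiL
  push_cast
  rw [pow_succ]
  nlinarith [hsum, hp, hLc]

lemma psiL_mono (E : Finset ℕ) (s : ℕ) (hs : 1 ≤ s)
    (hcard : (E \ Finset.range (Nat.choose (s + 1) 2)).card ≤ s) :
    ∀ L, s - 1 ≤ L → PsiL E L ≤ PsiL E (s - 1) := by
  intro L
  induction L with
  | zero => intro h; have : s - 1 = 0 := by omega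
            rw [this]
  | succ L ih =>
    intro h
    by_cases h' : s - 1 ≤ L
    · exact le_trans (psiL_step E s L (by omega) hcard) (ih h')
    · have : s - 1 = L + 1 := by omega
      rw [this]

lemma psiL_ub (E : Finset ℕ) (s : ℕ) (hs : 1 ≤ s)
    (hcard : (E \ Finset.range (Nat.choose (s + 1) 2)).card ≤ s) :
    ∀ L, PsiL E L ≤ (Finset.range s).sup' ⟨0, Finset.mem_range.mpr hs⟩ (PsiL E) := by
  intro L
  by_cases h : L < s
  · exact Finset.le_sup' _ (Finset.mem_range.mpr h)
  · refine le_trans (psiL_mono E s hs hcard L (by omega)) ?_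
    exact Finset.le_sup' _ (Finset.mem_range.mpr (by omega))

/-- If `A \ [Δ_4(s)]` has at most `s` elements (`s ≥ 1`), then removing any
element of `A` decreases `Ψ` by at most `2^{s-1}`. -/
theorem psi_removal (A : Finset ℕ) (s : ℕ) (hs : 1 ≤ s)
    (hcard : (A \ Finset.range (Nat.choose (s + 1) 2)).card ≤ s)
    (a : ℕ) (ha : a ∈ A) :
    Psi A - Psi (A.erase a) ≤ 2 ^ (s - 1) := by
  have hne : (Finset.range s).Nonempty := ⟨0, Finset.mem_range.mpr hs⟩
  have hcard' : ((A.erase a) \ Finset.range (Nat.choose (s + 1) 2)).card ≤ s :=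
    le_trans (Finset.card_le_card (Finset.sdiff_subset_sdiff (Finset.erase_subset a A) le_rfl)) hcard
  obtain ⟨L₀, hL₀, hB⟩ := Finset.exists_mem_eq_sup' hne (PsiL A)
  have hL₀s : L₀ ≤ s - 1 := by have := Finset.mem_range.mp hL₀; omega
  have h1 : Psi A ≤ PsiL A L₀ := by
    refine csSup_le ⟨PsiL A 0, ⟨0, rfl⟩⟩ ?_
    rintro x ⟨L, rfl⟩
    rw [← hB] at *
    exact psiL_ub A s hs hcard L
  have h2 : PsiL (A.erase a) L₀ ≤ Psi (A.erase a) := by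
    refine le_csSup ?_ ⟨L₀, rfl⟩
    refine ⟨(Finset.range s).sup' hne (PsiL (A.erase a)), ?_⟩
    rintro x ⟨L, rfl⟩
    exact psiL_ub (A.erase a) s hs hcard' L
  have h3 : PsiL A L₀ = PsiL (A.erase a) L₀ + 2 ^ min (nabla4 a) L₀ := by
    unfold PsiL
    rw [← Finset.sum_erase_add A _ ha]
    ring
  have h4 : (2:ℤ) ^ min (nabla4 a) L₀ ≤ 2 ^ (s - 1) := by
    refine pow_le_pow_right₀ (by norm_num) ?_
    exact le_trans (min_le_right _ _) hL₀s
  linarith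
end

section
/- For p ≥ 5 and m ≥ t ≥ 0 with t + 1 ≤ m − 1 and m ≥ p − 1, one has Δ_p(m) + Δ_{p−1}(t) + 1 ≥ Δ_p(m−1) + Δ_{p−1}(m−1) + Δ_{p−1}(t+1) + 2, where Δ_q(k) := C(k+q−3, q−2). -/
/-- `Δ_q(k) := C(k+q-3, q-2)`. -/
def Delta (q k : ℕ) : ℕ := Nat.choose (k + q - 3) (q - 2)

/-- Key counting inequality for Case 1 of the induction. -/
theorem case_one_inequality (p m t : ℕ) (hp : 5 ≤ p) (htm : t ≤ m)
    (ht : t + 1 ≤ m - 1) (hm : p - 1 ≤ m) :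
    Delta p m + Delta (p - 1) t + 1 ≥
      Delta p (m - 1) + Delta (p - 1) (m - 1) + Delta (p - 1) (t + 1) + 2 := by
  obtain ⟨q, rfl⟩ : ∃ q, p = q + 5 := ⟨p - 5, by omega⟩
  obtain ⟨n, rfl⟩ : ∃ n, m = n + 2 := ⟨m - 2, by omega⟩
  have htn : t ≤ n := by omega
  have e1 : n + 2 + (q + 5) - 3 = n + q + 4 := by omega
  have e2 : q + 5 - 2 = q + 3 := by omega
  have e3 : n + 2 - 1 + (q + 5) - 3 = n + q + 3 := by omega
  have e4 : n + 2 - 1 + (q + 5 - 1) - 3 = n + q + 2 := by omega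
  have e5 : q + 5 - 1 - 2 = q + 2 := by omega
  have e6 : t + (q + 5 - 1) - 3 = t + q + 1 := by omega
  have e7 : t + 1 + (q + 5 - 1) - 3 = t + q + 2 := by omega
  simp only [Delta, e1, e2, e3, e4, e5, e6, e7]
  have p1 : Nat.choose (n + q + 4) (q + 3)
      = Nat.choose (n + q + 3) (q + 2) + Nat.choose (n + q + 3) (q + 3) :=
    Nat.choose_succ_succ (n + q + 3) (q + 2)
  have p2 : Nat.choose (n + q + 3) (q + 2)
      = Nat.choose (n + q + 2) (q + 1) + Nat.choose (n + q + 2) (q + 2) :=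
    Nat.choose_succ_succ (n + q + 2) (q + 1)
  have p3 : Nat.choose (n + q + 2) (q + 1)
      = Nat.choose (n + q + 1) q + Nat.choose (n + q + 1) (q + 1) :=
    Nat.choose_succ_succ (n + q + 1) q
  have p4 : Nat.choose (t + q + 2) (q + 2)
      = Nat.choose (t + q + 1) (q + 1) + Nat.choose (t + q + 1) (q + 2) :=
    Nat.choose_succ_succ (t + q + 1) (q + 1)
  have h1 : Nat.choose (t + q + 1) (q + 1) ≤ Nat.choose (n + q + 1) (q + 1) :=
    Nat.choose_le_choose _ (by omega)
  have h2 : 0 < Nat.choose (n + q + 1) q := Nat.choose_pos (by omega)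
  linarith
end
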